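/- Let Δ > 0 and let ϱ : [0, ∞) → [0, ∞) be nonincreasing with convergent series μ := ϱ(0) + 2·Σ_{m=1}^∞ ϱ(mΔ). Let B₁, …, B_p ∈ ℝ^{N×q} be matrices such that each B_i has columns b_{i,1}, …, b_{i,q} satisfying |⟨b_{i,n}, b_{i,m}⟩| ≤ ϱ(|n − m|·Δ) for all n, m ∈ {1, …, q}. Then for every u ∈ ℝ^p with ‖u‖ ≤ 1, the block concatenation [u₁B₁ … u_pB_p] ∈ ℝ^{N×pq} satisfies ‖[u₁B₁ … u_pB_p]‖ ≤ √μ. -/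

import Mathlib

/-!
STATEMENT 16: Coherence bound for the spectral norm of a scaled block concatenation,
the `k ∈ {1,2,3}` case: `‖[u₁B₁ … u_pB_p]‖ ≤ √μ` for `‖u‖ ≤ 1`.

The columns of the `i`-th block are `b_{i,m} = B i · m`, with Euclidean inner products
`⟨b_{i,n}, b_{i,m}⟩ = Σⱼ B i j n · B i j m`.  Spectral norms come from the scoped instances
of `Matrix.L2OpNorm`, `u` carries the Euclidean norm, and `Σ_{m=1}^∞ ϱ(mΔ)` is indexed by
`m : ℕ` through `ϱ((m+1)·Δ)`.
-/

open scoped Matrix.Norms.L2Operator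

/-- The scaled horizontal concatenation `M(u) = [u₁B₁ u₂B₂ … u_pB_p]`. -/
def scaledHcat {N p q : ℕ} (u : EuclideanSpace ℝ (Fin p))
    (B : Fin p → Matrix (Fin N) (Fin q) ℝ) :
    Matrix (Fin N) (Fin p × Fin q) ℝ :=
  Matrix.of fun n ik => u ik.1 * B ik.1 n ik.2

/-- Row sum bound: `∑_m ϱ(|n-m|Δ) ≤ ϱ 0 + 2 ∑' ϱ((m+1)Δ)`. -/
lemma rowsum_le {q : ℕ} (Δ : ℝ) (hΔ : 0 < Δ) (ϱ : ℝ → ℝ)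
    (hϱ0 : ∀ s ∈ Set.Ici (0 : ℝ), 0 ≤ ϱ s)
    (hsum : Summable fun m : ℕ => ϱ ((m + 1) * Δ)) (n : Fin q) :
    ∑ m : Fin q, ϱ (|(n : ℝ) - (m : ℝ)| * Δ) ≤ ϱ 0 + 2 * ∑' m : ℕ, ϱ ((m + 1) * Δ) := by
  classical
  have hf0 : ∀ m : ℕ, 0 ≤ ϱ ((m + 1) * Δ) := fun m =>
    hϱ0 _ (Set.mem_Ici.mpr (by positivity))
  have htsum0 : (0 : ℝ) ≤ ∑' m : ℕ, ϱ ((m + 1) * Δ) := tsum_nonneg hf0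
  -- split univ into {n}, {m < n}, {m > n}
  have hsplit : (Finset.univ : Finset (Fin q)) =
      insert n ((Finset.univ.filter (· < n)) ∪ (Finset.univ.filter (n < ·))) := by
    ext m
    simp only [Finset.mem_insert, Finset.mem_union, Finset.mem_filter, Finset.mem_univ,
      true_and, true_iff]
    rcases lt_trichotomy m n with h | h | h
    · exact Or.inr (Or.inl h)
    · exact Or.inl h
    · exact Or.inr (Or.inr h)
  have hnmem : n ∉ (Finset.univ.filter (· < n)) ∪ (Finset.univ.filter (n < ·)) := by
    simp
  have hdisj : Disjoint (Finset.univ.filter (· < n)) (Finset.univ.filter (n < ·)) := by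
    rw [Finset.disjoint_left]
    intro m hm hm'
    simp only [Finset.mem_filter] at hm hm'
    exact absurd (hm.2.trans hm'.2) (lt_irrefl m)
  rw [hsplit, Finset.sum_insert hnmem, Finset.sum_union hdisj]
  have h0 : ϱ (|(n : ℝ) - (n : ℝ)| * Δ) = ϱ 0 := by norm_num
  rw [h0]
  have key : ∀ (s : Finset (Fin q)) (e : Fin q → ℕ),
      (∀ m ∈ s, ϱ (|(n : ℝ) - (m : ℝ)| * Δ) = ϱ ((e m + 1) * Δ)) →
      Set.InjOn e s →
      ∑ m ∈ s, ϱ (|(n : ℝ) - (m : ℝ)| * Δ) ≤ ∑' m : ℕ, ϱ ((m + 1) * Δ) := by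
    intro s e he hinj
    calc ∑ m ∈ s, ϱ (|(n : ℝ) - (m : ℝ)| * Δ)
        = ∑ m ∈ s, ϱ ((e m + 1) * Δ) := Finset.sum_congr rfl he
      _ = ∑ d ∈ s.image e, ϱ ((d + 1) * Δ) := by
            rw [Finset.sum_image (fun a ha b hb hab =>
              hinj (Finset.mem_coe.mpr ha) (Finset.mem_coe.mpr hb) hab)]
      _ ≤ ∑' m : ℕ, ϱ ((m + 1) * Δ) :=
            Summable.sum_le_tsum _ (fun m _ => hf0 m) hsum
  have h1 : ∑ m ∈ Finset.univ.filter (· < n), ϱ (|(n : ℝ) - (m : ℝ)| * Δ)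
      ≤ ∑' m : ℕ, ϱ ((m + 1) * Δ) := by
    refine key _ (fun m => n.val - m.val - 1) ?_ ?_
    · intro m hm
      simp only [Finset.mem_filter, Finset.mem_univ, true_and] at hm
      have hlt : m.val < n.val := hm
      have h2 : n.val - m.val - 1 + 1 = n.val - m.val := by omega
      have hcast : ((n.val - m.val - 1 : ℕ) : ℝ) + 1 = (n.val : ℝ) - (m.val : ℝ) := by
        rw [show ((n.val - m.val - 1 : ℕ) : ℝ) + 1 = ((n.val - m.val - 1 + 1 : ℕ) : ℝ) by
          push_cast; ring, h2, Nat.cast_sub hlt.le]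
      have habs : |(n : ℝ) - (m : ℝ)| = (n.val : ℝ) - (m.val : ℝ) := by
        rw [abs_of_nonneg (by
          have := (Nat.cast_lt (α := ℝ)).2 hlt
          linarith)]
      congr 1
      rw [habs, hcast]
    · intro a ha b hb hab
      simp only [Finset.coe_filter, Set.mem_setOf_eq, Finset.mem_univ, true_and] at ha hb
      have ha' : a.val < n.val := ha
      have hb' : b.val < n.val := hb
      have hab' : n.val - a.val - 1 = n.val - b.val - 1 := hab
      exact Fin.ext (by omega)
  have h2 : ∑ m ∈ Finset.univ.filter (n < ·), ϱ (|(n : ℝ) - (m : ℝ)| * Δ)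
      ≤ ∑' m : ℕ, ϱ ((m + 1) * Δ) := by
    refine key _ (fun m => m.val - n.val - 1) ?_ ?_
    · intro m hm
      simp only [Finset.mem_filter, Finset.mem_univ, true_and] at hm
      have hlt : n.val < m.val := hm
      have h2 : m.val - n.val - 1 + 1 = m.val - n.val := by omega
      have hcast : ((m.val - n.val - 1 : ℕ) : ℝ) + 1 = (m.val : ℝ) - (n.val : ℝ) := by
        rw [show ((m.val - n.val - 1 : ℕ) : ℝ) + 1 = ((m.val - n.val - 1 + 1 : ℕ) : ℝ) by
          push_cast; ring, h2, Nat.cast_sub hlt.le]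
      have habs : |(n : ℝ) - (m : ℝ)| = (m.val : ℝ) - (n.val : ℝ) := by
        rw [abs_sub_comm, abs_of_nonneg (by
          have := (Nat.cast_lt (α := ℝ)).2 hlt
          linarith)]
      congr 1
      rw [habs, hcast]
    · intro a ha b hb hab
      simp only [Finset.coe_filter, Set.mem_setOf_eq, Finset.mem_univ, true_and] at ha hb
      have ha' : n.val < a.val := ha
      have hb' : n.val < b.val := hb
      have hab' : a.val - n.val - 1 = b.val - n.val - 1 := hab
      exact Fin.ext (by omega)
  linarith

/-- Per-block quadratic form bound. -/
lemma block_quad_le {N q : ℕ} (Δ : ℝ) (hΔ : 0 < Δ) (ϱ : ℝ → ℝ)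
    (hϱ0 : ∀ s ∈ Set.Ici (0 : ℝ), 0 ≤ ϱ s)
    (hsum : Summable fun m : ℕ => ϱ ((m + 1) * Δ))
    (μ : ℝ) (hμ : μ = ϱ 0 + 2 * ∑' m : ℕ, ϱ ((m + 1) * Δ))
    (A : Matrix (Fin N) (Fin q) ℝ)
    (hcorr : ∀ n m : Fin q, |∑ j, A j n * A j m| ≤ ϱ (|(n : ℝ) - (m : ℝ)| * Δ))
    (v : Fin q → ℝ) :
    ∑ j : Fin N, (∑ m, A j m * v m) ^ 2 ≤ μ * ∑ m, (v m) ^ 2 := by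
  have hrow : ∀ n : Fin q, ∑ m : Fin q, ϱ (|(n : ℝ) - (m : ℝ)| * Δ) ≤ μ := by
    intro n; rw [hμ]; exact rowsum_le Δ hΔ ϱ hϱ0 hsum n
  have hϱnn : ∀ n m : Fin q, 0 ≤ ϱ (|(n : ℝ) - (m : ℝ)| * Δ) := fun n m =>
    hϱ0 _ (Set.mem_Ici.mpr (by positivity))
  have expand : ∑ j : Fin N, (∑ m, A j m * v m) ^ 2
      = ∑ n : Fin q, ∑ m : Fin q, (v n * v m) * (∑ j, A j n * A j m) := by
    simp_rw [sq, Finset.sum_mul_sum, Finset.mul_sum]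
    rw [Finset.sum_comm]
    refine Finset.sum_congr rfl fun n _ => ?_
    rw [Finset.sum_comm]
    refine Finset.sum_congr rfl fun m _ => ?_
    refine Finset.sum_congr rfl fun j _ => by ring
  rw [expand]
  have step1 : ∑ n : Fin q, ∑ m : Fin q, (v n * v m) * (∑ j, A j n * A j m)
      ≤ ∑ n : Fin q, ∑ m : Fin q, ((v n) ^ 2 + (v m) ^ 2) / 2 * ϱ (|(n : ℝ) - (m : ℝ)| * Δ) := by
    refine Finset.sum_le_sum fun n _ => Finset.sum_le_sum fun m _ => ?_
    calc (v n * v m) * (∑ j, A j n * A j m)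
        ≤ |(v n * v m) * (∑ j, A j n * A j m)| := le_abs_self _
      _ = |v n * v m| * |∑ j, A j n * A j m| := abs_mul _ _
      _ ≤ |v n * v m| * ϱ (|(n : ℝ) - (m : ℝ)| * Δ) := by
          exact mul_le_mul_of_nonneg_left (hcorr n m) (abs_nonneg _)
      _ ≤ ((v n) ^ 2 + (v m) ^ 2) / 2 * ϱ (|(n : ℝ) - (m : ℝ)| * Δ) := by
          refine mul_le_mul_of_nonneg_right ?_ (hϱnn n m)
          rw [abs_mul]
          nlinarith [sq_nonneg (|v n| - |v m|), sq_abs (v n), sq_abs (v m)]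
  have step2 : ∑ n : Fin q, ∑ m : Fin q, ((v n) ^ 2 + (v m) ^ 2) / 2 * ϱ (|(n : ℝ) - (m : ℝ)| * Δ)
      ≤ μ * ∑ m, (v m) ^ 2 := by
    have hsym : ∑ n : Fin q, ∑ m : Fin q, (v m) ^ 2 * ϱ (|(n : ℝ) - (m : ℝ)| * Δ)
        = ∑ n : Fin q, ∑ m : Fin q, (v n) ^ 2 * ϱ (|(n : ℝ) - (m : ℝ)| * Δ) := by
      rw [Finset.sum_comm]
      refine Finset.sum_congr rfl fun n _ => Finset.sum_congr rfl fun m _ => ?_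
      rw [abs_sub_comm]
    have hsym2 : ∑ n : Fin q, ∑ m : Fin q, (v m) ^ 2 * ϱ (|(n : ℝ) - (m : ℝ)| * Δ) / 2
        = ∑ n : Fin q, ∑ m : Fin q, (v n) ^ 2 * ϱ (|(n : ℝ) - (m : ℝ)| * Δ) / 2 := by
      rw [Finset.sum_comm]
      refine Finset.sum_congr rfl fun n _ => Finset.sum_congr rfl fun m _ => ?_
      rw [abs_sub_comm]
    calc ∑ n : Fin q, ∑ m : Fin q, ((v n) ^ 2 + (v m) ^ 2) / 2 * ϱ (|(n : ℝ) - (m : ℝ)| * Δ)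
        = (∑ n : Fin q, ∑ m : Fin q, (v n) ^ 2 * ϱ (|(n : ℝ) - (m : ℝ)| * Δ) / 2)
          + ∑ n : Fin q, ∑ m : Fin q, (v m) ^ 2 * ϱ (|(n : ℝ) - (m : ℝ)| * Δ) / 2 := by
          simp_rw [← Finset.sum_add_distrib]
          refine Finset.sum_congr rfl fun n _ => Finset.sum_congr rfl fun m _ => by ring
      _ = ∑ n : Fin q, ∑ m : Fin q, (v n) ^ 2 * ϱ (|(n : ℝ) - (m : ℝ)| * Δ) := by
          rw [hsym2, ← Finset.sum_add_distrib]
          refine Finset.sum_congr rfl fun n _ => ?_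
          rw [← Finset.sum_add_distrib]
          refine Finset.sum_congr rfl fun m _ => by ring
      _ = ∑ n : Fin q, (v n) ^ 2 * ∑ m : Fin q, ϱ (|(n : ℝ) - (m : ℝ)| * Δ) := by
          refine Finset.sum_congr rfl fun n _ => ?_
          rw [Finset.mul_sum]
      _ ≤ ∑ n : Fin q, (v n) ^ 2 * μ := by
          refine Finset.sum_le_sum fun n _ => ?_
          exact mul_le_mul_of_nonneg_left (hrow n) (sq_nonneg _)
      _ = μ * ∑ m, (v m) ^ 2 := by rw [← Finset.sum_mul]; ring
  exact le_trans step1 step2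

theorem coherence_bound_scaled_blocks
    {N p q : ℕ} (Δ : ℝ) (hΔ : 0 < Δ)
    (ϱ : ℝ → ℝ)
    (hϱ0 : ∀ s ∈ Set.Ici (0 : ℝ), 0 ≤ ϱ s)
    (hϱanti : AntitoneOn ϱ (Set.Ici (0 : ℝ)))
    (hsum : Summable fun m : ℕ => ϱ ((m + 1) * Δ))
    (μ : ℝ) (hμ : μ = ϱ 0 + 2 * ∑' m : ℕ, ϱ ((m + 1) * Δ))
    (B : Fin p → Matrix (Fin N) (Fin q) ℝ)
    (hcorr : ∀ (i : Fin p) (n m : Fin q),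
      |∑ j, B i j n * B i j m| ≤ ϱ (|(n : ℝ) - (m : ℝ)| * Δ)) :
    ∀ u : EuclideanSpace ℝ (Fin p), ‖u‖ ≤ 1 →
      ‖scaledHcat u B‖ ≤ Real.sqrt μ := by
  intro u hu
  have hμ0 : 0 ≤ μ := by
    rw [hμ]
    have h0 : 0 ≤ ϱ 0 := hϱ0 0 (Set.mem_Ici.mpr le_rfl)
    have h1 : 0 ≤ ∑' m : ℕ, ϱ ((m + 1) * Δ) :=
      tsum_nonneg fun m => hϱ0 _ (Set.mem_Ici.mpr (by positivity))
    linarith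
  rw [Matrix.l2_opNorm_def]
  refine ContinuousLinearMap.opNorm_le_bound _ (Real.sqrt_nonneg μ) fun y => ?_
  -- the applied map is mulVec
  have happ : (((Matrix.toEuclideanLin).trans LinearMap.toContinuousLinearMap)
      (scaledHcat u B)) y
      = (WithLp.equiv 2 (Fin N → ℝ)).symm
          ((scaledHcat u B).mulVec ((WithLp.equiv 2 (Fin p × Fin q → ℝ)) y)) := rfl
  rw [happ]
  -- block norms
  set w : Fin p → EuclideanSpace ℝ (Fin N) := fun i =>
    (WithLp.equiv 2 (Fin N → ℝ)).symm (u i • ((B i).mulVec fun m => y (i, m))) with hw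
  have hsum_blocks : (WithLp.equiv 2 (Fin N → ℝ)).symm
      ((scaledHcat u B).mulVec ((WithLp.equiv 2 (Fin p × Fin q → ℝ)) y)) = ∑ i : Fin p, w i := by
    apply PiLp.ext
    intro j
    have : (∑ i : Fin p, w i) j = ∑ i : Fin p, w i j :=
      by rw [WithLp.ofLp_sum, Finset.sum_apply]
    rw [this]
    simp only [hw, WithLp.equiv_symm_apply, PiLp.toLp_apply, Pi.smul_apply, smul_eq_mul]
    simp only [Matrix.mulVec, dotProduct, scaledHcat, Matrix.of_apply]
    rw [← Finset.univ_product_univ, Finset.sum_product]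
    refine Finset.sum_congr rfl fun i _ => ?_
    rw [Finset.mul_sum]
    refine Finset.sum_congr rfl fun m _ => ?_
    simp [WithLp.equiv_apply]
    ring
  rw [hsum_blocks]
  -- per block: ‖w i‖ ≤ |u i| * (√μ * ‖yᵢ‖)
  have hynorm : ∀ i : Fin p, Real.sqrt (∑ m, (y (i, m)) ^ 2)
      = Real.sqrt (∑ m, (y (i, m)) ^ 2) := fun _ => rfl
  have hblock : ∀ i : Fin p, ‖w i‖ ≤ |u i| * (Real.sqrt μ * Real.sqrt (∑ m, (y (i, m)) ^ 2)) := by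
    intro i
    have hnorm : ‖w i‖ = |u i| * Real.sqrt (∑ j, (((B i).mulVec fun m => y (i, m)) j) ^ 2) := by
      rw [hw]
      rw [EuclideanSpace.norm_eq]
      simp only [WithLp.equiv_symm_apply, PiLp.toLp_apply, Pi.smul_apply, smul_eq_mul, Real.norm_eq_abs,
        sq_abs]
      rw [show ∀ f : Fin N → ℝ, (∑ j, (u i * f j) ^ 2) = (u i)^2 * ∑ j, (f j)^2 by
        intro f; rw [Finset.mul_sum]; exact Finset.sum_congr rfl fun j _ => by ring]
      rw [Real.sqrt_mul (sq_nonneg _), Real.sqrt_sq_eq_abs]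
    rw [hnorm]
    refine mul_le_mul_of_nonneg_left ?_ (abs_nonneg _)
    have hq := block_quad_le Δ hΔ ϱ hϱ0 hsum μ hμ (B i) (hcorr i) (fun m => y (i, m))
    calc Real.sqrt (∑ j, (((B i).mulVec fun m => y (i, m)) j) ^ 2)
        ≤ Real.sqrt (μ * ∑ m, (y (i, m)) ^ 2) := by
          apply Real.sqrt_le_sqrt
          simpa [Matrix.mulVec, dotProduct] using hq
      _ = Real.sqrt μ * Real.sqrt (∑ m, (y (i, m)) ^ 2) := Real.sqrt_mul hμ0 _
  calc ‖∑ i : Fin p, w i‖ ≤ ∑ i : Fin p, ‖w i‖ := norm_sum_le _ _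
    _ ≤ ∑ i : Fin p, |u i| * (Real.sqrt μ * Real.sqrt (∑ m, (y (i, m)) ^ 2)) :=
        Finset.sum_le_sum fun i _ => hblock i
    _ = Real.sqrt μ * ∑ i : Fin p, |u i| * Real.sqrt (∑ m, (y (i, m)) ^ 2) := by
        rw [Finset.mul_sum]; exact Finset.sum_congr rfl fun i _ => by ring
    _ ≤ Real.sqrt μ * (Real.sqrt (∑ i, |u i| ^ 2) *
          Real.sqrt (∑ i, (Real.sqrt (∑ m, (y (i, m)) ^ 2)) ^ 2)) := by
        refine mul_le_mul_of_nonneg_left ?_ (Real.sqrt_nonneg μ)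
        exact Real.sum_mul_le_sqrt_mul_sqrt _ _ _
    _ ≤ Real.sqrt μ * (1 * ‖y‖) := by
        refine mul_le_mul_of_nonneg_left ?_ (Real.sqrt_nonneg μ)
        have h1 : Real.sqrt (∑ i, |u i| ^ 2) = ‖u‖ := by
          rw [EuclideanSpace.norm_eq]
          simp [Real.norm_eq_abs]
        have h2 : Real.sqrt (∑ i, (Real.sqrt (∑ m, (y (i, m)) ^ 2)) ^ 2) = ‖y‖ := by
          rw [EuclideanSpace.norm_eq]
          congr 1
          rw [← Finset.univ_product_univ, Finset.sum_product]
          refine Finset.sum_congr rfl fun i _ => ?_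
          rw [Real.sq_sqrt (Finset.sum_nonneg fun m _ => sq_nonneg _)]
          refine Finset.sum_congr rfl fun m _ => ?_
          simp [Real.norm_eq_abs, sq_abs]
        rw [h1, h2]
        exact mul_le_mul_of_nonneg_right hu (norm_nonneg _)
    _ = Real.sqrt μ * ‖y‖ := by ring
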